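/- Let V ⊆ E be a subspace with x ∈ V and v ∉ V. Then V ∩ u(V) has codimension 1 in V, i.e. finrank_K V = finrank_K (V ∩ u(V)) + 1; equivalently, the quotient V / (V ∩ u(V)) is one-dimensional over K. In particular u(V) ≠ V. -/

import Mathlib

open Submodule

/-- with `E = U ⊕ K·x ⊕ W`, `v ∈ U`, and `u` the unipotent automorphism fixing
`U` and `W` pointwise and sending `x` to `x + v`, if `V ⊆ E` is a subspace with `x ∈ V` and
`v ∉ V`, then `V ∩ u(V)` has codimension `1` in `V`:
`finrank V = finrank (V ∩ u(V)) + 1`, equivalently the quotient `V/(V ∩ u(V))` is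
one-dimensional; in particular `u(V) ≠ V`. -/
theorem codim_one_of_unipotent_translate
    {K E : Type*} [Field K] [AddCommGroup E] [Module K E] [FiniteDimensional K E]
    (U W : Submodule K E) (x : E) (hx : x ≠ 0)
    (hUdisj : U ⊓ ((K ∙ x) ⊔ W) = ⊥)
    (hxdisj : (K ∙ x) ⊓ (U ⊔ W) = ⊥)
    (hWdisj : W ⊓ (U ⊔ (K ∙ x)) = ⊥)
    (hspan : U ⊔ (K ∙ x) ⊔ W = ⊤)
    (v : E) (hv : v ∈ U)
    (u : E →ₗ[K] E)
    (huU : ∀ y ∈ U, u y = y) (huW : ∀ y ∈ W, u y = y) (hux : u x = x + v)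
    (V : Submodule K E) (hxV : x ∈ V) (hvV : v ∉ V) :
    Module.finrank K V = Module.finrank K ↥(V ⊓ Submodule.map u V) + 1 ∧
    Module.finrank K (↥V ⧸ (V ⊓ Submodule.map u V).comap V.subtype) = 1 ∧
    Submodule.map u V ≠ V := by
  classical
  -- `K ∙ x` and `U ⊔ W` are complementary
  have hsup : (K ∙ x) ⊔ (U ⊔ W) = ⊤ := by
    rw [sup_comm U, sup_assoc] at hspan; exact hspan
  have hcompl : IsCompl (K ∙ x) (U ⊔ W) :=
    ⟨disjoint_iff.2 hxdisj, codisjoint_iff.2 hsup⟩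
  -- the coordinate functional along `x`
  let e : K ≃ₗ[K] (K ∙ x) := LinearEquiv.toSpanNonzeroSingleton K E x hx
  let c : E →ₗ[K] K :=
    (e.symm : (K ∙ x) →ₗ[K] K) ∘ₗ Submodule.projectionOnto _ _ hcompl
  have hcx : c x = 1 := by
    have h1 : Submodule.projectionOnto _ _ hcompl x =
        ⟨x, Submodule.mem_span_singleton_self x⟩ :=
      Submodule.projectionOnto_apply_left hcompl ⟨x, Submodule.mem_span_singleton_self x⟩
    have h2 : e 1 = ⟨x, Submodule.mem_span_singleton_self x⟩ := by
      ext; simp [e, LinearEquiv.toSpanNonzeroSingleton]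
    simp only [c, LinearMap.coe_comp, Function.comp_apply, h1, ← h2,
      LinearEquiv.coe_coe, LinearEquiv.symm_apply_apply]
  have hcUW : ∀ y ∈ U ⊔ W, c y = 0 := by
    intro y hy
    simp [c, Submodule.projectionOnto_apply_right hcompl ⟨y, hy⟩]
  have hcU : ∀ y ∈ U, c y = 0 := fun y hy => hcUW y (Submodule.mem_sup_left hy)
  have hcW : ∀ y ∈ W, c y = 0 := fun y hy => hcUW y (Submodule.mem_sup_right hy)
  -- the key formula `u y = y + c y • v`
  have hu : ∀ y : E, u y = y + c y • v := by
    intro y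
    have hy : y ∈ U ⊔ (K ∙ x) ⊔ W := hspan ▸ Submodule.mem_top
    obtain ⟨z, hz, w, hw, rfl⟩ := Submodule.mem_sup.1 hy
    obtain ⟨a, ha, b, hb, rfl⟩ := Submodule.mem_sup.1 hz
    obtain ⟨t, rfl⟩ := Submodule.mem_span_singleton.1 hb
    have hc : c (a + t • x + w) = t := by
      simp [map_add, map_smul, hcU a ha, hcW w hw, hcx]
    rw [hc]
    simp only [map_add, map_smul, huU a ha, huW w hw, hux, smul_add]
    abel
  -- the restricted functional
  set cV : V →ₗ[K] K := c ∘ₗ V.subtype with hcVdef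
  have hcVx : cV ⟨x, hxV⟩ = 1 := hcx
  -- the intersection is the kernel of `cV`
  have hinter : V ⊓ Submodule.map u V = Submodule.map V.subtype (LinearMap.ker cV) := by
    apply le_antisymm
    · rintro y ⟨hyV, z, hzV, rfl⟩
      have hz : u z = z + c z • v := hu z
      by_cases hcz : c z = 0
      · have : u z = z := by rw [hz, hcz, zero_smul, add_zero]
        refine ⟨⟨z, hzV⟩, ?_, by simp [this]⟩
        simpa [cV, LinearMap.mem_ker] using hcz
      · exfalso
        apply hvV
        have hvmem : c z • v ∈ V := by
          have := V.sub_mem hyV hzV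
          rwa [hz, add_sub_cancel_left] at this
        have := V.smul_mem (c z)⁻¹ hvmem
        rwa [smul_smul, inv_mul_cancel₀ hcz, one_smul] at this
    · rintro _ ⟨⟨y, hyV⟩, hyk, rfl⟩
      have hcy : c y = 0 := hyk
      refine ⟨hyV, y, hyV, ?_⟩
      rw [hu y, hcy, zero_smul, add_zero]
      rfl
  -- `cV` is surjective
  have hrange : LinearMap.range cV = ⊤ := by
    rw [LinearMap.range_eq_top]
    intro a
    exact ⟨a • ⟨x, hxV⟩, by rw [map_smul, hcVx, smul_eq_mul, mul_one]⟩
  have hrk : Module.finrank K V = Module.finrank K (LinearMap.ker cV) + 1 := by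
    have h := LinearMap.finrank_range_add_finrank_ker cV
    rw [hrange, finrank_top, Module.finrank_self] at h
    omega
  have hfin : Module.finrank K ↥(V ⊓ Submodule.map u V) =
      Module.finrank K (LinearMap.ker cV) := by
    rw [hinter]
    exact (Submodule.equivMapOfInjective V.subtype V.injective_subtype
      (LinearMap.ker cV)).symm.finrank_eq
  have hcomap : (V ⊓ Submodule.map u V).comap V.subtype = LinearMap.ker cV := by
    rw [hinter, Submodule.comap_map_eq_of_injective V.injective_subtype]
  have h1 : Module.finrank K V = Module.finrank K ↥(V ⊓ Submodule.map u V) + 1 := by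
    rw [hfin]; exact hrk
  refine ⟨h1, ?_, ?_⟩
  · rw [hcomap]
    have h := Submodule.finrank_quotient_add_finrank (LinearMap.ker cV)
    omega
  · intro heq
    rw [heq, inf_idem] at h1
    omega
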